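/- Let X be a reflexive real Banach space, M : X → ℝ convex, proper and Gâteaux differentiable with Gâteaux derivative M′ : X → X* weak-to-weak continuous, and define the Bregman divergence B_M(x, z) := M(z) − M(x) − ⟨M′(x), z − x⟩. Let X̂ ⊆ X be nonempty, (x^k)_{k≥0} ⊂ X, and for each x̄ ∈ X̂ let (e_k(x̄))_{k≥0} be nonnegative reals. Assume: (i) every weak limit point of (x^k) belongs to X̂; (ii) B_M(x^{k+1}, x̄) ≤ B_M(x^k, x̄) + e_k(x̄) for all x̄ ∈ X̂ and k ≥ 0; (iii) Σ_{k=0}^{∞} e_k(x̄) < ∞ for all x̄ ∈ X̂. Then any two weak limit points x̂, x̄ of (x^k) lie in X̂ and satisfy ⟨M′(x̂) − M′(x̄), x̂ − x̄⟩ = 0. If (x^k) is bounded, a weak limit point exists. If, in addition, ⟨M′(x̂) − M′(x̄), x̂ − x̄⟩ = 0 for x̂, x̄ ∈ X̂ implies x̂ = x̄, then the whole sequence x^k converges weakly to some x̂ ∈ X̂. -/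

import Mathlib

set_option maxHeartbeats 1000000
set_option synthInstance.maxHeartbeats 400000

open Filter

section Aux
open NormedSpace Set TopologicalSpace


variable {W : Type*} [NormedAddCommGroup W] [NormedSpace ℝ W]

/-- Separation: a functional vanishing on a closed subspace, nonzero at a point outside. -/
theorem sep_lemma (K : Submodule ℝ W) (hK : IsClosed (K : Set W)) {w : W} (hw : w ∉ K) :
    ∃ f : W →L[ℝ] ℝ, (∀ y ∈ K, f y = 0) ∧ f w ≠ 0 := by
  obtain ⟨f, u, hfu, huw⟩ := geometric_hahn_banach_closed_point K.convex hK hw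
  have hvanish : ∀ y ∈ K, f y = 0 := by
    intro y hy
    by_contra h
    have hmem : ((u + 1) / f y) • y ∈ K := K.smul_mem _ hy
    have := hfu _ hmem
    rw [map_smul, smul_eq_mul, div_mul_cancel₀ _ h] at this
    linarith
  have h0 : (0:ℝ) < u := by simpa [hvanish 0 K.zero_mem] using hfu 0 K.zero_mem
  exact ⟨f, hvanish, by intro h; rw [h] at huw; linarith⟩

/-- If every functional vanishing on `s` is zero, then the span of `s` is dense. -/
theorem dense_span_of_dual (s : Set W)
    (h : ∀ f : W →L[ℝ] ℝ, (∀ y ∈ s, f y = 0) → f = 0) :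
    Dense ((Submodule.span ℝ s).topologicalClosure : Set W) := by
  intro w
  by_contra hw
  have hwmem : w ∉ (Submodule.span ℝ s).topologicalClosure :=
    fun hmem => hw (subset_closure hmem)
  obtain ⟨f, hf0, hfw⟩ := sep_lemma _ (Submodule.isClosed_topologicalClosure _) hwmem
  have : f = 0 := by
    apply h
    intro y hy
    exact hf0 y (Submodule.le_topologicalClosure _ (Submodule.subset_span hy))
  simp [this] at hfw


variable {W : Type*} [NormedAddCommGroup W] [NormedSpace ℝ W]


/-- countable set with dense span gives separability -/
theorem sep_of_dense_span {s : Set W} (hs : s.Countable)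
    (hd : Dense ((Submodule.span ℝ s).topologicalClosure : Set W)) :
    SeparableSpace W := by
  have h1 : IsSeparable ((Submodule.span ℝ s : Set W)) :=
    (hs.isSeparable).span
  have h2 : IsSeparable (((Submodule.span ℝ s).topologicalClosure : Set W)) := h1.closure
  have h3 : IsSeparable (univ : Set W) := by
    have hcoe : ((Submodule.span ℝ s).topologicalClosure : Set W)
        = closure (Submodule.span ℝ s : Set W) := rfl
    have hcl : IsClosed ((Submodule.span ℝ s).topologicalClosure : Set W) :=
      Submodule.isClosed_topologicalClosure _
    have : ((Submodule.span ℝ s).topologicalClosure : Set W) = univ := by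
      have := hd.closure_eq
      rwa [hcl.closure_eq] at this
    rwa [this] at h2
  exact isSeparable_univ_iff.mp h3

/-- dual separable ⇒ space separable -/
theorem sep_of_dual_sep [SeparableSpace (W →L[ℝ] ℝ)] : SeparableSpace W := by
  obtain ⟨Λ, hΛ⟩ := exists_dense_seq (α := W →L[ℝ] ℝ)
  have hchoice : ∀ n, ∃ w : W, ‖w‖ ≤ 1 ∧ ‖Λ n‖ / 2 ≤ ‖Λ n w‖ := by
    intro n
    rcases eq_or_ne (Λ n) 0 with h | h
    · exact ⟨0, by simp [h]⟩
    · obtain ⟨w, hw1, hw2⟩ := ContinuousLinearMap.exists_lt_apply_of_lt_opNorm (Λ n)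
        (r := ‖Λ n‖ / 2) (by have := norm_pos_iff.mpr h; linarith)
      exact ⟨w, hw1.le, hw2.le⟩
  choose w hw1 hw2 using hchoice
  apply sep_of_dense_span (countable_range w)
  apply dense_span_of_dual
  intro f hf
  by_contra hf0
  have hfpos : 0 < ‖f‖ := norm_pos_iff.mpr hf0
  obtain ⟨n, hn⟩ : ∃ n, dist (Λ n) f < ‖f‖ / 3 := by
    obtain ⟨m, hm⟩ := hΛ.exists_dist_lt f (by positivity : (0:ℝ) < ‖f‖/3)
    exact ⟨m, by rwa [dist_comm] at hm⟩
  have h1 : ‖Λ n - f‖ < ‖f‖ / 3 := by rwa [← dist_eq_norm]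
  have h2 : ‖f‖ - ‖f‖/3 ≤ ‖Λ n‖ := by
    have hnorm : ‖Λ n - (Λ n - f)‖ ≤ ‖Λ n‖ + ‖Λ n - f‖ := norm_sub_le _ _
    have heq : Λ n - (Λ n - f) = f := by abel
    rw [heq] at hnorm
    linarith
  have h4 : ‖f‖ / 3 ≤ ‖(Λ n) (w n)‖ := by
    have := hw2 n
    linarith
  have h5 : (Λ n) (w n) = (Λ n - f) (w n) := by
    simp [hf (w n) (mem_range_self n)]
  have h6 : ‖(Λ n) (w n)‖ ≤ ‖Λ n - f‖ := by
    rw [h5]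
    calc ‖(Λ n - f) (w n)‖ ≤ ‖Λ n - f‖ * ‖w n‖ := ContinuousLinearMap.le_opNorm _ _
    _ ≤ ‖Λ n - f‖ * 1 := by
        apply mul_le_mul_of_nonneg_left (hw1 n) (norm_nonneg _)
    _ = ‖Λ n - f‖ := mul_one _
  linarith


variable {X : Type*} [NormedAddCommGroup X] [NormedSpace ℝ X]

theorem refl_subspace
    (hrefl : Function.Surjective (inclusionInDoubleDual ℝ X))
    (Y : Submodule ℝ X) (hY : IsClosed (Y : Set X)) :
    Function.Surjective (inclusionInDoubleDual ℝ ↥Y) := by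
  intro Λ
  set R : (X →L[ℝ] ℝ) →L[ℝ] (↥Y →L[ℝ] ℝ) :=
    (ContinuousLinearMap.compL ℝ ↥Y X ℝ).flip Y.subtypeL with hR
  have hRapp : ∀ (f : X →L[ℝ] ℝ) (z : ↥Y), R f z = f z := by
    intro f z
    simp [hR]
  obtain ⟨x₀, hx₀⟩ := hrefl (Λ.comp R)
  have hx₀' : ∀ f : X →L[ℝ] ℝ, f x₀ = Λ (R f) := by
    intro f
    have := ContinuousLinearMap.ext_iff.mp hx₀ f
    simpa [NormedSpace.dual_def] using this
  have hmem : x₀ ∈ Y := by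
    by_contra hne
    obtain ⟨f, hf0, hfx⟩ := sep_lemma Y hY hne
    have hRf : R f = 0 := by
      ext z
      simp [hRapp, hf0 z z.2]
    have := hx₀' f
    rw [hRf] at this
    simp at this
    exact hfx this
  refine ⟨⟨x₀, hmem⟩, ?_⟩
  ext h
  obtain ⟨g, hg, -⟩ := exists_extension_norm_eq Y h
  have hRg : R g = h := by
    ext z
    rw [hRapp]
    exact hg z
  have := hx₀' g
  rw [hRg] at this
  have hgx : g x₀ = h ⟨x₀, hmem⟩ := hg ⟨x₀, hmem⟩
  simp [NormedSpace.dual_def, ← hgx, this]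


variable {X : Type*} [NormedAddCommGroup X] [NormedSpace ℝ X]

theorem weak_compact
    (hrefl : Function.Surjective (inclusionInDoubleDual ℝ X))
    (u : ℕ → X) (C : ℝ) (hC : ∀ k, ‖u k‖ ≤ C) :
    ∃ (w : X) (φ : ℕ → ℕ), StrictMono φ ∧
      ∀ f : X →L[ℝ] ℝ, Tendsto (fun n => f (u (φ n))) atTop (nhds (f w)) := by
  have hC0 : 0 ≤ C := le_trans (norm_nonneg (u 0)) (hC 0)
  set Y : Submodule ℝ X := (Submodule.span ℝ (Set.range u)).topologicalClosure with hYdef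
  have hYc : IsClosed (Y : Set X) := Submodule.isClosed_topologicalClosure _
  have hmem : ∀ k, u k ∈ Y := fun k =>
    Submodule.le_topologicalClosure _ (Submodule.subset_span (mem_range_self k))
  -- separability of Y
  have hsep : IsSeparable (Y : Set X) := by
    have h1 : IsSeparable ((Submodule.span ℝ (Set.range u) : Set X)) :=
      (countable_range u).isSeparable.span
    exact h1.closure
  have hsepY : SeparableSpace ↥Y := hsep.separableSpace
  -- reflexivity of Y
  have hreflY : Function.Surjective (inclusionInDoubleDual ℝ ↥Y) :=
    refl_subspace hrefl Y hYc
  -- double dual of Y separable, hence dual of Y separable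
  have hsepYdd : SeparableSpace ((↥Y →L[ℝ] ℝ) →L[ℝ] ℝ) :=
    hreflY.denseRange.separableSpace (inclusionInDoubleDual ℝ ↥Y).continuous
  have hsepYd : SeparableSpace (↥Y →L[ℝ] ℝ) := by
    have := sep_of_dual_sep (W := ↥Y →L[ℝ] ℝ); exact this
  -- dense sequence in the dual of Y
  obtain ⟨g, hg⟩ := exists_dense_seq (α := ↥Y →L[ℝ] ℝ)
  -- the sequence inside Y
  set uY : ℕ → ↥Y := fun k => ⟨u k, hmem k⟩ with huY
  have huYnorm : ∀ k, ‖uY k‖ ≤ C := fun k => hC k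
  -- diagonal extraction via compactness in ℝ^ℕ
  set S : Set (ℕ → ℝ) := Set.univ.pi (fun m => Icc (-(‖g m‖ * C)) (‖g m‖ * C)) with hS
  have hScomp : IsCompact S := isCompact_univ_pi fun m => isCompact_Icc
  have hFS : ∀ k, (fun m => g m (uY k)) ∈ S := by
    intro k
    rw [Set.mem_univ_pi]
    intro m
    have h1 : ‖g m (uY k)‖ ≤ ‖g m‖ * C := by
      calc ‖g m (uY k)‖ ≤ ‖g m‖ * ‖uY k‖ := ContinuousLinearMap.le_opNorm _ _
      _ ≤ ‖g m‖ * C := mul_le_mul_of_nonneg_left (huYnorm k) (norm_nonneg (g m))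
    rw [Real.norm_eq_abs, abs_le] at h1
    exact ⟨h1.1, h1.2⟩
  obtain ⟨L, _, φ, hφ, hconv⟩ := hScomp.tendsto_subseq hFS
  have hm : ∀ m, Tendsto (fun k => g m (uY (φ k))) atTop (nhds (L m)) := by
    intro m
    exact (tendsto_pi_nhds.mp hconv) m
  -- every functional on Y converges along this subsequence
  have hCauchy : ∀ h : ↥Y →L[ℝ] ℝ, ∃ l : ℝ,
      Tendsto (fun k => h (uY (φ k))) atTop (nhds l) := by
    intro h
    have hcs : CauchySeq (fun k => h (uY (φ k))) := by
      rw [Metric.cauchySeq_iff]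
      intro ε hε
      have hε3 : 0 < ε / (3 * (C + 1)) := by positivity
      obtain ⟨m, hmd₀⟩ := hg.exists_dist_lt h hε3
      have hmd : ‖h - g m‖ < ε / (3 * (C + 1)) := by
        rw [show dist h (g m) = ‖h - g m‖ from by have := dist_eq_norm h (g m); exact this] at hmd₀
        exact hmd₀
      have hmc : CauchySeq (fun k => g m (uY (φ k))) := (hm m).cauchySeq
      rw [Metric.cauchySeq_iff] at hmc
      obtain ⟨N, hN⟩ := hmc (ε / 3) (by positivity)
      refine ⟨N, fun i hi j hj => ?_⟩
      have key : ∀ k, dist (h (uY (φ k))) (g m (uY (φ k))) ≤ ε / 3 := by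
        intro k
        rw [dist_eq_norm]
        have : h (uY (φ k)) - g m (uY (φ k)) = (h - g m) (uY (φ k)) := by simp
        rw [this]
        calc ‖(h - g m) (uY (φ k))‖ ≤ ‖h - g m‖ * ‖uY (φ k)‖ :=
              ContinuousLinearMap.le_opNorm _ _
        _ ≤ (ε / (3 * (C + 1))) * (C + 1) := by
            apply mul_le_mul hmd.le (le_trans (huYnorm _) (by linarith)) (norm_nonneg _) hε3.le
        _ = ε / 3 := by
            have hC1 : C + 1 ≠ 0 := by linarith
            field_simp
      calc dist (h (uY (φ i))) (h (uY (φ j)))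
          ≤ dist (h (uY (φ i))) (g m (uY (φ i))) + dist (g m (uY (φ i))) (g m (uY (φ j)))
            + dist (g m (uY (φ j))) (h (uY (φ j))) := dist_triangle4 _ _ _ _
        _ < ε / 3 + ε / 3 + ε / 3 := by
            have k1 := key i
            have k2 := hN i hi j hj
            have k3 := key j
            rw [dist_comm] at k3
            linarith
        _ = ε := by ring
    exact cauchySeq_tendsto_of_complete hcs
  choose T hT using hCauchy
  -- T is linear and bounded
  have hTadd : ∀ h₁ h₂, T (h₁ + h₂) = T h₁ + T h₂ := by
    intro h₁ h₂
    refine tendsto_nhds_unique (hT (h₁ + h₂)) ?_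
    have := (hT h₁).add (hT h₂)
    simpa using this
  have hTsmul : ∀ (c : ℝ) h, T (c • h) = c • T h := by
    intro c h
    refine tendsto_nhds_unique (hT (c • h)) ?_
    have := (hT h).const_mul c
    simpa [smul_eq_mul] using this
  have hTbound : ∀ h, ‖T h‖ ≤ C * ‖h‖ := by
    intro h
    have hnorm : Tendsto (fun k => ‖h (uY (φ k))‖) atTop (nhds ‖T h‖) := (hT h).norm
    refine le_of_tendsto hnorm (Filter.Eventually.of_forall fun k => ?_)
    calc ‖h (uY (φ k))‖ ≤ ‖h‖ * ‖uY (φ k)‖ := ContinuousLinearMap.le_opNorm _ _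
    _ ≤ ‖h‖ * C := mul_le_mul_of_nonneg_left (huYnorm _) (norm_nonneg h)
    _ = C * ‖h‖ := mul_comm _ _
  set Λ : ((↥Y →L[ℝ] ℝ) →L[ℝ] ℝ) :=
    LinearMap.mkContinuous
      { toFun := T, map_add' := hTadd, map_smul' := hTsmul } C hTbound with hΛ
  obtain ⟨y, hy⟩ := hreflY Λ
  have hyh : ∀ h : ↥Y →L[ℝ] ℝ, h y = T h := by
    intro h
    have := ContinuousLinearMap.ext_iff.mp hy h
    simpa [NormedSpace.dual_def, hΛ] using this
  refine ⟨(y : X), φ, hφ, fun f => ?_⟩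
  have hfy : f (y : X) = T (f.comp Y.subtypeL) := by
    have := hyh (f.comp Y.subtypeL)
    simpa using this
  rw [hfy]
  have := hT (f.comp Y.subtypeL)
  simpa using this


theorem quasi_fejer (a eps : ℕ → ℝ) (ha : ∀ k, 0 ≤ a k) (he : ∀ k, 0 ≤ eps k)
    (hd : ∀ k, a (k + 1) ≤ a k + eps k) (hsum : Summable eps) :
    ∃ l : ℝ, Tendsto a atTop (nhds l) := by
  have hsummk : ∀ k, Summable (fun j => eps (j + k)) := fun k =>
    (summable_nat_add_iff k).mpr hsum
  have htrec : ∀ k, (∑' j, eps (j + k)) = eps k + ∑' j, eps (j + (k + 1)) := by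
    intro k
    have h1 := Summable.sum_add_tsum_nat_add (f := fun j => eps (j + k)) 1 (hsummk k)
    simp only [Finset.sum_range_one, zero_add] at h1
    rw [← h1]
    congr 1
    exact tsum_congr fun i => by congr 1; omega
  have ht0 : ∀ k, 0 ≤ ∑' j, eps (j + k) := fun k => tsum_nonneg (fun j => he _)
  have hanti : Antitone (fun k => a k + ∑' j, eps (j + k)) := by
    apply antitone_nat_of_succ_le
    intro k
    show a (k + 1) + (∑' j, eps (j + (k + 1))) ≤ a k + ∑' j, eps (j + k)
    have := hd k
    rw [htrec k]
    linarith
  have hbdd : BddBelow (range (fun k => a k + ∑' j, eps (j + k))) := by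
    refine ⟨0, fun y hy => ?_⟩
    obtain ⟨k, rfl⟩ := hy
    have h1 := ha k; have h2 := ht0 k
    show (0:ℝ) ≤ a k + ∑' j, eps (j + k)
    linarith
  have hconv := tendsto_atTop_ciInf hanti hbdd
  have htz : Tendsto (fun k => ∑' j, eps (j + k)) atTop (nhds 0) :=
    tendsto_sum_nat_add eps
  exact ⟨_, Filter.Tendsto.congr (fun k => by ring) (hconv.sub htz)⟩

theorem bregman_nonneg {X : Type*} [NormedAddCommGroup X] [NormedSpace ℝ X]
    (M : X → ℝ) (hMconv : ConvexOn ℝ Set.univ M)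
    (M' : X → StrongDual ℝ X)
    (hGateaux : ∀ u h : X, HasDerivAt (fun t : ℝ => M (u + t • h)) (M' u h) 0)
    (u v : X) : M' u (v - u) ≤ M v - M u := by
  set g : ℝ → ℝ := fun t => M (u + t • (v - u)) with hg
  have hgconv : ConvexOn ℝ Set.univ g := by
    have h1 := hMconv.comp_affineMap (AffineMap.lineMap u v)
    have h2 : (AffineMap.lineMap u v : ℝ →ᵃ[ℝ] X) ⁻¹' Set.univ = Set.univ := by simp
    rw [h2] at h1
    have h3 : (M ∘ (AffineMap.lineMap u v : ℝ →ᵃ[ℝ] X)) = g := by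
      funext t
      simp [hg, AffineMap.lineMap_apply, vsub_eq_sub, vadd_eq_add, add_comm]
    rwa [h3] at h1
  have hderiv : HasDerivAt g (M' u (v - u)) 0 := hGateaux u (v - u)
  have hslope : Tendsto (slope g 0) (nhdsWithin 0 {(0:ℝ)}ᶜ) (nhds (M' u (v - u))) :=
    hasDerivAt_iff_tendsto_slope.mp hderiv
  have hslope' : Tendsto (slope g 0) (nhdsWithin 0 (Ioi (0:ℝ))) (nhds (M' u (v - u))) :=
    hslope.mono_left (nhdsWithin_mono 0 (fun y hy => ne_of_gt hy))
  have hle : M' u (v - u) ≤ slope g 0 1 := by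
    apply le_of_tendsto hslope'
    filter_upwards [Ioo_mem_nhdsGT_of_mem (by norm_num : (0:ℝ) ∈ Ico 0 1)] with s hs
    have hmono := hgconv.slope_mono (mem_univ (0:ℝ))
    exact hmono ⟨mem_univ s, ne_of_gt hs.1⟩ ⟨mem_univ 1, one_ne_zero⟩ hs.2.le
  have hval : slope g 0 1 = M v - M u := by
    simp [slope_def_field, hg]
  rw [← hval]
  exact hle


end Aux


/-- Weak convergence of a sequence in a normed space: convergence tested against
every continuous linear functional. -/
def WeakConv {X : Type*} [NormedAddCommGroup X] [NormedSpace ℝ X]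
    (u : ℕ → X) (x : X) : Prop :=
  ∀ f : StrongDual ℝ X, Tendsto (fun n => f (u n)) atTop (nhds (f x))

/-- A weak limit point of a sequence: the weak limit of some subsequence. -/
def WeakLimitPoint {X : Type*} [NormedAddCommGroup X] [NormedSpace ℝ X]
    (u : ℕ → X) (x : X) : Prop :=
  ∃ φ : ℕ → ℕ, StrictMono φ ∧ WeakConv (u ∘ φ) x

theorem stmt19 {X : Type*} [NormedAddCommGroup X] [NormedSpace ℝ X] [CompleteSpace X]
    -- reflexivity: the canonical embedding into the double dual is surjective
    (hrefl : Function.Surjective (NormedSpace.inclusionInDoubleDual ℝ X))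
    (M : X → ℝ) (hMconv : ConvexOn ℝ Set.univ M)
    (M' : X → StrongDual ℝ X)
    (hGateaux : ∀ u h : X, HasDerivAt (fun t : ℝ => M (u + t • h)) (M' u h) 0)
    (hM'wc : ∀ (u : ℕ → X) (w : X), WeakConv u w →
      ∀ v : X, Tendsto (fun n => M' (u n) v) atTop (nhds (M' w v)))
    (B : X → X → ℝ)
    (hB : ∀ u v : X, B u v = M v - M u - M' u (v - u))
    (Xhat : Set X) (hXhat : Xhat.Nonempty)
    (x : ℕ → X) (e : X → ℕ → ℝ)
    (he0 : ∀ xb ∈ Xhat, ∀ k : ℕ, 0 ≤ e xb k)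
    (hlim : ∀ w : X, WeakLimitPoint x w → w ∈ Xhat)
    (hmono : ∀ xb ∈ Xhat, ∀ k : ℕ, B (x (k + 1)) xb ≤ B (x k) xb + e xb k)
    (hesum : ∀ xb ∈ Xhat, Summable (e xb)) :
    (∀ xh xb : X, WeakLimitPoint x xh → WeakLimitPoint x xb →
      xh ∈ Xhat ∧ xb ∈ Xhat ∧ (M' xh - M' xb) (xh - xb) = 0)
    ∧ ((∃ C : ℝ, ∀ k : ℕ, ‖x k‖ ≤ C) → ∃ xh : X, WeakLimitPoint x xh)
    ∧ ((∃ C : ℝ, ∀ k : ℕ, ‖x k‖ ≤ C) →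
        (∀ xh xb : X, xh ∈ Xhat → xb ∈ Xhat →
          (M' xh - M' xb) (xh - xb) = 0 → xh = xb) →
        ∃ xh ∈ Xhat, WeakConv x xh) := by
  -- Bregman distances to points of Xhat converge
  have hBnonneg : ∀ k (z : X), 0 ≤ B (x k) z := by
    intro k z
    rw [hB]
    have := bregman_nonneg M hMconv M' hGateaux (x k) z
    linarith
  have hqf : ∀ z ∈ Xhat, ∃ l : ℝ, Tendsto (fun k => B (x k) z) atTop (nhds l) := by
    intro z hz
    exact quasi_fejer _ (e z) (fun k => hBnonneg k z) (he0 z hz) (hmono z hz) (hesum z hz)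
  -- Part 1
  have part1 : ∀ xh xb : X, WeakLimitPoint x xh → WeakLimitPoint x xb →
      xh ∈ Xhat ∧ xb ∈ Xhat ∧ (M' xh - M' xb) (xh - xb) = 0 := by
    intro xh xb hxh hxb
    have hxhX := hlim xh hxh
    have hxbX := hlim xb hxb
    refine ⟨hxhX, hxbX, ?_⟩
    obtain ⟨α, hα⟩ := hqf xh hxhX
    obtain ⟨β, hβ⟩ := hqf xb hxbX
    set δ : ℝ := (β - α) - (M xb - M xh) with hδ
    have hdiff : ∀ k, M' (x k) (xh - xb) =
        (B (x k) xb - B (x k) xh) - (M xb - M xh) := by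
      intro k
      have h1 : (M' (x k)) (xh - xb) = (M' (x k)) (xh - x k) - (M' (x k)) (xb - x k) := by
        rw [← map_sub]
        congr 1
        abel
      rw [hB, hB] at *
      linarith
    have htends : Tendsto (fun k => M' (x k) (xh - xb)) atTop (nhds δ) := by
      rw [hδ]
      exact Filter.Tendsto.congr (fun k => (hdiff k).symm) ((hβ.sub hα).sub tendsto_const_nhds)
    have key : ∀ z : X, WeakLimitPoint x z → M' z (xh - xb) = δ := by
      intro z hz
      obtain ⟨φ, hφ, hwc⟩ := hz
      have h1 : Tendsto (fun n => M' (x (φ n)) (xh - xb)) atTop (nhds (M' z (xh - xb))) :=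
        hM'wc (x ∘ φ) z hwc (xh - xb)
      have h2 : Tendsto (fun n => M' (x (φ n)) (xh - xb)) atTop (nhds δ) :=
        htends.comp hφ.tendsto_atTop
      exact tendsto_nhds_unique h1 h2
    have e1 := key xh hxh
    have e2 := key xb hxb
    rw [ContinuousLinearMap.sub_apply]
    rw [e1, e2]
    ring
  refine ⟨part1, ?_, ?_⟩
  · rintro ⟨C, hC⟩
    obtain ⟨w, φ, hφ, hwf⟩ := weak_compact hrefl x C hC
    exact ⟨w, φ, hφ, fun f => hwf f⟩
  · rintro ⟨C, hC⟩ huniq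
    obtain ⟨w, φ, hφ, hwf⟩ := weak_compact hrefl x C hC
    have hwlp : WeakLimitPoint x w := ⟨φ, hφ, fun f => hwf f⟩
    refine ⟨w, hlim w hwlp, ?_⟩
    intro f
    by_contra hnot
    rw [Metric.tendsto_atTop] at hnot
    push_neg at hnot
    obtain ⟨ε, hε, hfreq⟩ := hnot
    obtain ⟨ψ, hψ, hψP⟩ := Filter.extraction_of_frequently_atTop
      (Filter.frequently_atTop.mpr hfreq)
    obtain ⟨w', σ, hσ, hw'f⟩ := weak_compact hrefl (x ∘ ψ) C (fun k => hC (ψ k))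
    have hw'lp : WeakLimitPoint x w' := ⟨ψ ∘ σ, hψ.comp hσ, fun g => hw'f g⟩
    obtain ⟨hmem1, hmem2, hpair⟩ := part1 w w' hwlp hw'lp
    have hww' : w = w' := huniq w w' hmem1 hmem2 hpair
    have hconv := hw'f f
    rw [← hww'] at hconv
    rw [Metric.tendsto_atTop] at hconv
    obtain ⟨N, hN⟩ := hconv ε hε
    have h1 := hN N le_rfl
    have h2 := hψP (σ N)
    simp only [Function.comp_apply] at h1
    linarith
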